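/- Let s=(s₁,s₂) and s̃=(s̃₁,s̃₂) be two solutions of the explicit slow-down system on [0,T] with s₁(t)>0 and s₂(t)>0 for all t, let T₁∈[0,T] be such that s₁≤s₂ on [0,T₁] and s₂≤s₁ on [T₁,T], and set Δsᵢ(t)=s̃ᵢ(t)−sᵢ(t). Let 0<μ<1 and assume: (1) Δs₂(t)>0 and |Δs₁(t)| ≤ μ·Δs₂(t) for all t∈[0,T]; (2) Δs₂(0)/s₂(0) < (1−μ)/72. Define χ(t) = Δs₂(t)/s₁(t). Then for every t∈[T₁,T] one has χ'(t) < −((1−μ)·log λ/(2r₀^α))·s₁(t)^{2α}·χ(t); moreover χ(T) ≤ χ(T₁)·(1 + 2^α·C₁·s₁(T)^{2α}·(T−T₁))^{−(1−μ)/(α·2^{α+1})} ≤ χ(T₁). -/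

import Mathlib

set_option maxHeartbeats 1000000

open Set

private lemma bern_concave {x y a : ℝ} (hx : 0 < x) (hxy : x ≤ y) (ha0 : 0 ≤ a) (ha1 : a ≤ 1) :
    y ^ a ≤ x ^ a + a * x ^ (a - 1) * (y - x) := by
  have hs : (0:ℝ) ≤ (y - x) / x := div_nonneg (by linarith) hx.le
  have h1 : (1 + (y - x) / x) ^ a ≤ 1 + a * ((y - x) / x) :=
    rpow_one_add_le_one_add_mul_self (by linarith) ha0 ha1
  have hy : y = x * (1 + (y - x) / x) := by field_simp; ring
  have hxa : (0:ℝ) < x ^ a := Real.rpow_pos_of_pos hx a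
  have h2 : y ^ a = x ^ a * (1 + (y - x) / x) ^ a := by
    rw [← Real.mul_rpow hx.le (by linarith), ← hy]
  have h4 : x ^ (a - 1) = x ^ a / x := by
    rw [Real.rpow_sub hx, Real.rpow_one]
  rw [h2, h4]
  calc x ^ a * (1 + (y - x) / x) ^ a ≤ x ^ a * (1 + a * ((y - x) / x)) :=
        mul_le_mul_of_nonneg_left h1 hxa.le
    _ = x ^ a + a * (x ^ a / x) * (y - x) := by field_simp

private lemma key_ineq {a μ p q c d : ℝ} (ha : 0 < a) (ha1 : a ≤ 1)
    (hμ : 0 < μ) (hμ1 : μ ≤ 1) (hq : 0 < q) (hΔ : 0 < d - q)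
    (h1 : |c - p| ≤ μ * (d - q)) :
    -((1 + μ) * (d - q) * (p ^ 2 + q ^ 2) ^ a) ≤
      d * ((c ^ 2 + d ^ 2) ^ a - (p ^ 2 + q ^ 2) ^ a) := by
  have hd : 0 < d := by nlinarith
  have hρs0 : (0:ℝ) < p ^ 2 + q ^ 2 := by positivity
  have hρu0 : (0:ℝ) < c ^ 2 + d ^ 2 := by positivity
  have hρsa : 0 < (p ^ 2 + q ^ 2) ^ a := Real.rpow_pos_of_pos hρs0 a
  have hρua : 0 < (c ^ 2 + d ^ 2) ^ a := Real.rpow_pos_of_pos hρu0 a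
  rcases le_or_gt (p ^ 2 + q ^ 2) (c ^ 2 + d ^ 2) with h | h
  · have hmono : (p ^ 2 + q ^ 2) ^ a ≤ (c ^ 2 + d ^ 2) ^ a :=
      Real.rpow_le_rpow hρs0.le h ha.le
    have h0 : 0 ≤ d * ((c ^ 2 + d ^ 2) ^ a - (p ^ 2 + q ^ 2) ^ a) :=
      mul_nonneg hd.le (by linarith)
    have h1' : 0 < (1 + μ) * (d - q) * (p ^ 2 + q ^ 2) ^ a := by positivity
    linarith
  · -- bad case ρu < ρs
    have hb := bern_concave hρu0 h.le ha.le ha1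
    have hbb : (p ^ 2 + q ^ 2) ^ a - (c ^ 2 + d ^ 2) ^ a ≤
        a * (c ^ 2 + d ^ 2) ^ (a - 1) * ((p ^ 2 + q ^ 2) - (c ^ 2 + d ^ 2)) := by linarith
    have habs : |c + p| ≤ 2 * |c| + μ * (d - q) := by
      have e : c + p = 2 * c - (c - p) := by ring
      calc |c + p| = |2 * c - (c - p)| := by rw [← e]
        _ ≤ |2 * c| + |c - p| := abs_sub _ _
        _ ≤ 2 * |c| + μ * (d - q) := by
            rw [abs_mul]; simp only [Nat.abs_ofNat]; linarith
    have h2 : (p ^ 2 + q ^ 2) - (c ^ 2 + d ^ 2) ≤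
        μ * (d - q) * (2 * |c| + μ * (d - q)) := by
      have e2 : (p - c) * (p + c) ≤ |c - p| * |c + p| := by
        calc (p - c) * (p + c) ≤ |(p - c) * (p + c)| := le_abs_self _
          _ = |c - p| * |c + p| := by
              rw [abs_mul, abs_sub_comm p c, show p + c = c + p by ring]
      have e3 : (q - d) * (q + d) ≤ 0 := by nlinarith
      have e4 : |c - p| * |c + p| ≤ (μ * (d - q)) * (2 * |c| + μ * (d - q)) :=
        mul_le_mul h1 habs (abs_nonneg _) (by positivity)
      nlinarith
    have hcd : 2 * |c| * d ≤ c ^ 2 + d ^ 2 := by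
      nlinarith [sq_abs c, sq_nonneg (|c| - d)]
    have hkey2 : d * ((p ^ 2 + q ^ 2) - (c ^ 2 + d ^ 2)) ≤
        μ * (d - q) * ((1 + μ) * (c ^ 2 + d ^ 2)) := by
      have h2' := mul_le_mul_of_nonneg_left h2 hd.le
      have hμΔ : 0 ≤ μ * (d - q) := by positivity
      have hcd' := mul_le_mul_of_nonneg_left hcd hμΔ
      nlinarith [mul_nonneg hμΔ (mul_nonneg hμ.le (mul_pos hd hq).le),
        mul_nonneg hμΔ (mul_nonneg hμ.le (sq_nonneg c))]
    have hpow : (c ^ 2 + d ^ 2) ^ (a - 1) * (c ^ 2 + d ^ 2) = (c ^ 2 + d ^ 2) ^ a := by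
      rw [← Real.rpow_add_one hρu0.ne' (a - 1)]; ring_nf
    have hρua1 : 0 < (c ^ 2 + d ^ 2) ^ (a - 1) := Real.rpow_pos_of_pos hρu0 _
    have hmono : (c ^ 2 + d ^ 2) ^ a ≤ (p ^ 2 + q ^ 2) ^ a :=
      Real.rpow_le_rpow hρu0.le h.le ha.le
    have hchain : d * ((p ^ 2 + q ^ 2) ^ a - (c ^ 2 + d ^ 2) ^ a) ≤
        a * μ * (1 + μ) * (d - q) * (c ^ 2 + d ^ 2) ^ a := by
      calc d * ((p ^ 2 + q ^ 2) ^ a - (c ^ 2 + d ^ 2) ^ a)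
          ≤ d * (a * (c ^ 2 + d ^ 2) ^ (a - 1) * ((p ^ 2 + q ^ 2) - (c ^ 2 + d ^ 2))) :=
            mul_le_mul_of_nonneg_left hbb hd.le
        _ = (a * (c ^ 2 + d ^ 2) ^ (a - 1)) * (d * ((p ^ 2 + q ^ 2) - (c ^ 2 + d ^ 2))) := by
            ring
        _ ≤ (a * (c ^ 2 + d ^ 2) ^ (a - 1)) * (μ * (d - q) * ((1 + μ) * (c ^ 2 + d ^ 2))) :=
            mul_le_mul_of_nonneg_left hkey2 (by positivity)
        _ = a * μ * (1 + μ) * (d - q) * ((c ^ 2 + d ^ 2) ^ (a - 1) * (c ^ 2 + d ^ 2)) := by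
            ring
        _ = a * μ * (1 + μ) * (d - q) * (c ^ 2 + d ^ 2) ^ a := by rw [hpow]
    have hfin : a * μ * (1 + μ) * (d - q) * (c ^ 2 + d ^ 2) ^ a ≤
        (1 + μ) * (d - q) * (p ^ 2 + q ^ 2) ^ a := by
      have haμ : a * μ ≤ 1 := by nlinarith
      have h6 : a * μ * ((1 + μ) * (d - q)) ≤ 1 * ((1 + μ) * (d - q)) :=
        mul_le_mul_of_nonneg_right haμ (by positivity)
      have h7 : a * μ * ((1 + μ) * (d - q)) * (c ^ 2 + d ^ 2) ^ a ≤
          1 * ((1 + μ) * (d - q)) * (p ^ 2 + q ^ 2) ^ a :=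
        mul_le_mul h6 hmono hρua.le (by positivity)
      linarith [h7]
    linarith

theorem slowdown_chi_decreasing
    (lam α r₀ C₁ T T₁ μ : ℝ) (hlam : 1 < lam) (hα : 0 < α) (hα1 : α < 1)
    (hr₀ : 0 < r₀) (hr₀1 : r₀ < 1)
    (hC₁ : C₁ = 2 * α * Real.log lam / r₀ ^ α)
    (hμ : 0 < μ) (hμ1 : μ < 1)
    (hT₁mem : T₁ ∈ Icc (0:ℝ) T)
    (s₁ s₂ u₁ u₂ : ℝ → ℝ)
    (hs₁ : ∀ t ∈ Icc (0:ℝ) T,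
      HasDerivAt s₁ ((Real.log lam / r₀ ^ α) * s₁ t * (s₁ t ^ 2 + s₂ t ^ 2) ^ α) t)
    (hs₂ : ∀ t ∈ Icc (0:ℝ) T,
      HasDerivAt s₂ (-((Real.log lam / r₀ ^ α) * s₂ t * (s₁ t ^ 2 + s₂ t ^ 2) ^ α)) t)
    (hu₁ : ∀ t ∈ Icc (0:ℝ) T,
      HasDerivAt u₁ ((Real.log lam / r₀ ^ α) * u₁ t * (u₁ t ^ 2 + u₂ t ^ 2) ^ α) t)
    (hu₂ : ∀ t ∈ Icc (0:ℝ) T,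
      HasDerivAt u₂ (-((Real.log lam / r₀ ^ α) * u₂ t * (u₁ t ^ 2 + u₂ t ^ 2) ^ α)) t)
    (hpos₁ : ∀ t ∈ Icc (0:ℝ) T, 0 < s₁ t)
    (hpos₂ : ∀ t ∈ Icc (0:ℝ) T, 0 < s₂ t)
    (hord₁ : ∀ t ∈ Icc (0:ℝ) T₁, s₁ t ≤ s₂ t)
    (hord₂ : ∀ t ∈ Icc T₁ T, s₂ t ≤ s₁ t)
    (hΔ : ∀ t ∈ Icc (0:ℝ) T, 0 < u₂ t - s₂ t ∧ |u₁ t - s₁ t| ≤ μ * (u₂ t - s₂ t))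
    (hinit : (u₂ 0 - s₂ 0) / s₂ 0 < (1 - μ) / 72)
    (χ : ℝ → ℝ) (hχ : ∀ t, χ t = (u₂ t - s₂ t) / s₁ t) :
    (∀ t ∈ Icc T₁ T,
      deriv χ t < -((1 - μ) * Real.log lam / (2 * r₀ ^ α)) * s₁ t ^ (2 * α) * χ t) ∧
    χ T ≤ χ T₁ *
      (1 + 2 ^ α * C₁ * s₁ T ^ (2 * α) * (T - T₁)) ^ (-((1 - μ) / (α * 2 ^ (α + 1)))) ∧
    χ T₁ *
      (1 + 2 ^ α * C₁ * s₁ T ^ (2 * α) * (T - T₁)) ^ (-((1 - μ) / (α * 2 ^ (α + 1)))) ≤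
      χ T₁ := by
  obtain ⟨hT₁0, hT₁T⟩ := hT₁mem
  have hlog : 0 < Real.log lam := Real.log_pos hlam
  have hr₀α : 0 < r₀ ^ α := Real.rpow_pos_of_pos hr₀ α
  set L : ℝ := Real.log lam / r₀ ^ α with hLdef
  have hLpos : 0 < L := div_pos hlog hr₀α
  have hC₁L : C₁ = 2 * α * L := by rw [hC₁, hLdef]; ring
  have hC₁pos : 0 < C₁ := by rw [hC₁L]; positivity
  have hsub : Icc T₁ T ⊆ Icc (0:ℝ) T := fun t ht => ⟨hT₁0.trans ht.1, ht.2⟩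
  have hχfun : χ = fun t => (u₂ t - s₂ t) / s₁ t := funext hχ
  have hχpos : ∀ t ∈ Icc (0:ℝ) T, 0 < χ t := by
    intro t ht; rw [hχ]; exact div_pos (hΔ t ht).1 (hpos₁ t ht)
  have hs2a : ∀ t ∈ Icc (0:ℝ) T, s₁ t ^ (2 * α) ≤ (s₁ t ^ 2 + s₂ t ^ 2) ^ α := by
    intro t ht
    have h1 : s₁ t ^ (2 * α) = (s₁ t ^ 2) ^ α := by
      rw [← Real.rpow_natCast (s₁ t) 2, ← Real.rpow_mul (hpos₁ t ht).le]
      norm_num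
    rw [h1]
    exact Real.rpow_le_rpow (by positivity) (by nlinarith [sq_nonneg (s₂ t)]) hα.le
  -- core derivative bound for χ
  have hDχ : ∀ t ∈ Icc (0:ℝ) T, ∃ d', HasDerivAt χ d' t ∧
      d' ≤ -((1 - μ) * L) * (s₁ t ^ 2 + s₂ t ^ 2) ^ α * χ t := by
    intro t ht
    have hs1p := hpos₁ t ht
    have hder : HasDerivAt χ
        (((-(L * u₂ t * (u₁ t ^ 2 + u₂ t ^ 2) ^ α) - -(L * s₂ t * (s₁ t ^ 2 + s₂ t ^ 2) ^ α)) * s₁ t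
          - (u₂ t - s₂ t) * (L * s₁ t * (s₁ t ^ 2 + s₂ t ^ 2) ^ α)) / s₁ t ^ 2) t := by
      rw [hχfun]
      exact ((hu₂ t ht).sub (hs₂ t ht)).div (hs₁ t ht) hs1p.ne'
    refine ⟨_, hder, ?_⟩
    have hkey := key_ineq hα hα1.le hμ hμ1.le (hpos₂ t ht) (hΔ t ht).1 (hΔ t ht).2
    rw [hχ, div_le_iff₀ (by positivity : (0:ℝ) < s₁ t ^ 2)]
    have hF : (1 - μ) * ((u₂ t - s₂ t) * (s₁ t ^ 2 + s₂ t ^ 2) ^ α) ≤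
        2 * ((u₂ t - s₂ t) * (s₁ t ^ 2 + s₂ t ^ 2) ^ α)
          + u₂ t * ((u₁ t ^ 2 + u₂ t ^ 2) ^ α - (s₁ t ^ 2 + s₂ t ^ 2) ^ α) := by
      nlinarith [hkey]
    have hnp : -(L * s₁ t) ≤ 0 := neg_nonpos.mpr (mul_pos hLpos hs1p).le
    calc (-(L * u₂ t * (u₁ t ^ 2 + u₂ t ^ 2) ^ α) - -(L * s₂ t * (s₁ t ^ 2 + s₂ t ^ 2) ^ α)) * s₁ t
          - (u₂ t - s₂ t) * (L * s₁ t * (s₁ t ^ 2 + s₂ t ^ 2) ^ α)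
        = -(L * s₁ t) * (2 * ((u₂ t - s₂ t) * (s₁ t ^ 2 + s₂ t ^ 2) ^ α)
            + u₂ t * ((u₁ t ^ 2 + u₂ t ^ 2) ^ α - (s₁ t ^ 2 + s₂ t ^ 2) ^ α)) := by ring
      _ ≤ -(L * s₁ t) * ((1 - μ) * ((u₂ t - s₂ t) * (s₁ t ^ 2 + s₂ t ^ 2) ^ α)) :=
          mul_le_mul_of_nonpos_left hF hnp
      _ = -((1 - μ) * L) * (s₁ t ^ 2 + s₂ t ^ 2) ^ α * ((u₂ t - s₂ t) / s₁ t) * s₁ t ^ 2 := by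
          field_simp
  -- Gronwall function ψ = log χ + (1-μ) log s₁
  have hψd : ∀ t ∈ Icc (0:ℝ) T, ∃ d',
      HasDerivAt (fun t => Real.log (χ t) + (1 - μ) * Real.log (s₁ t)) d' t ∧ d' ≤ 0 := by
    intro t ht
    obtain ⟨d', hder, hle⟩ := hDχ t ht
    have hs1p := hpos₁ t ht
    have hχp := hχpos t ht
    have h1 : HasDerivAt (fun t => Real.log (χ t)) (d' / χ t) t := hder.log hχp.ne'
    have h2 : HasDerivAt (fun t => Real.log (s₁ t))
        ((L * s₁ t * (s₁ t ^ 2 + s₂ t ^ 2) ^ α) / s₁ t) t := (hs₁ t ht).log hs1p.ne'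
    refine ⟨_, h1.add (h2.const_mul (1 - μ)), ?_⟩
    have e1 : (L * s₁ t * (s₁ t ^ 2 + s₂ t ^ 2) ^ α) / s₁ t
        = L * (s₁ t ^ 2 + s₂ t ^ 2) ^ α := by field_simp
    have e2 : d' / χ t ≤ -((1 - μ) * L) * (s₁ t ^ 2 + s₂ t ^ 2) ^ α := by
      rw [div_le_iff₀ hχp]; linarith [hle]
    rw [e1]
    nlinarith [e2]
  have hψmono : AntitoneOn (fun t => Real.log (χ t) + (1 - μ) * Real.log (s₁ t)) (Icc T₁ T) := by
    apply antitoneOn_of_deriv_nonpos (convex_Icc T₁ T)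
    · intro t ht
      exact ((hψd t (hsub ht)).choose_spec.1).continuousAt.continuousWithinAt
    · rw [interior_Icc]; intro t ht
      exact ((hψd t (hsub (Ioo_subset_Icc_self ht))).choose_spec.1).differentiableAt.differentiableWithinAt
    · rw [interior_Icc]; intro t ht
      obtain ⟨d', hder, hle⟩ := hψd t (hsub (Ioo_subset_Icc_self ht))
      rw [hder.deriv]; exact hle
  -- f(t) = s₁ t ^ (-(2α)) + C₁ t is antitone
  have hfd : ∀ t ∈ Icc (0:ℝ) T, ∃ d',
      HasDerivAt (fun t => s₁ t ^ (-(2 * α)) + C₁ * t) d' t ∧ d' ≤ 0 := by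
    intro t ht
    have hs1p := hpos₁ t ht
    have h1 := (hs₁ t ht).rpow_const (p := -(2 * α)) (Or.inl hs1p.ne')
    have h2 : HasDerivAt (fun t : ℝ => C₁ * t) C₁ t := by
      simpa using (hasDerivAt_id t).const_mul C₁
    refine ⟨_, h1.add h2, ?_⟩
    have hsneg : 0 < s₁ t ^ (-(2 * α)) := Real.rpow_pos_of_pos hs1p _
    have e1 : s₁ t ^ (-(2 * α) - 1) * s₁ t = s₁ t ^ (-(2 * α)) := by
      rw [← Real.rpow_add_one hs1p.ne' (-(2 * α) - 1)]
      congr 1; ring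
    have e2 : s₁ t ^ (2 * α) * s₁ t ^ (-(2 * α)) = 1 := by
      rw [← Real.rpow_add hs1p]; simp
    have e3 : (1:ℝ) ≤ (s₁ t ^ 2 + s₂ t ^ 2) ^ α * s₁ t ^ (-(2 * α)) := by
      calc (1:ℝ) = s₁ t ^ (2 * α) * s₁ t ^ (-(2 * α)) := e2.symm
        _ ≤ (s₁ t ^ 2 + s₂ t ^ 2) ^ α * s₁ t ^ (-(2 * α)) :=
            mul_le_mul_of_nonneg_right (hs2a t ht) hsneg.le
    have e4 : L * s₁ t * (s₁ t ^ 2 + s₂ t ^ 2) ^ α * (-(2 * α)) * s₁ t ^ (-(2 * α) - 1) + C₁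
        = -(2 * α * L) * ((s₁ t ^ 2 + s₂ t ^ 2) ^ α * (s₁ t ^ (-(2 * α) - 1) * s₁ t)) + C₁ := by
      ring
    rw [e4, e1, hC₁L]
    have h5 : 2 * α * L * 1 ≤ 2 * α * L * ((s₁ t ^ 2 + s₂ t ^ 2) ^ α * s₁ t ^ (-(2 * α))) :=
      mul_le_mul_of_nonneg_left e3 (by positivity)
    linarith
  have hfmono : AntitoneOn (fun t => s₁ t ^ (-(2 * α)) + C₁ * t) (Icc T₁ T) := by
    apply antitoneOn_of_deriv_nonpos (convex_Icc T₁ T)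
    · intro t ht
      exact ((hfd t (hsub ht)).choose_spec.1).continuousAt.continuousWithinAt
    · rw [interior_Icc]; intro t ht
      exact ((hfd t (hsub (Ioo_subset_Icc_self ht))).choose_spec.1).differentiableAt.differentiableWithinAt
    · rw [interior_Icc]; intro t ht
      obtain ⟨d', hder, hle⟩ := hfd t (hsub (Ioo_subset_Icc_self ht))
      rw [hder.deriv]; exact hle
  -- g(t) = s₁ t ^ (-(2α)) + 2^α C₁ t is monotone on [T₁, T]
  have hgd : ∀ t ∈ Icc T₁ T, ∃ d',
      HasDerivAt (fun t => s₁ t ^ (-(2 * α)) + 2 ^ α * C₁ * t) d' t ∧ 0 ≤ d' := by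
    intro t ht
    have ht' := hsub ht
    have hs1p := hpos₁ t ht'
    have h1 := (hs₁ t ht').rpow_const (p := -(2 * α)) (Or.inl hs1p.ne')
    have h2 : HasDerivAt (fun t : ℝ => 2 ^ α * C₁ * t) (2 ^ α * C₁) t := by
      simpa using (hasDerivAt_id t).const_mul ((2:ℝ) ^ α * C₁)
    refine ⟨_, h1.add h2, ?_⟩
    have hsneg : 0 < s₁ t ^ (-(2 * α)) := Real.rpow_pos_of_pos hs1p _
    have e1 : s₁ t ^ (-(2 * α) - 1) * s₁ t = s₁ t ^ (-(2 * α)) := by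
      rw [← Real.rpow_add_one hs1p.ne' (-(2 * α) - 1)]
      congr 1; ring
    have e2 : s₁ t ^ (2 * α) * s₁ t ^ (-(2 * α)) = 1 := by
      rw [← Real.rpow_add hs1p]; simp
    have hupper : (s₁ t ^ 2 + s₂ t ^ 2) ^ α ≤ 2 ^ α * s₁ t ^ (2 * α) := by
      have hord := hord₂ t ht
      have hs2p := hpos₂ t ht'
      have h2s : (s₁ t ^ 2 + s₂ t ^ 2) ≤ 2 * s₁ t ^ 2 := by nlinarith
      have h2r : ((2:ℝ) * s₁ t ^ 2) ^ α = 2 ^ α * (s₁ t ^ 2) ^ α :=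
        Real.mul_rpow (by norm_num) (by positivity)
      have h2e : (s₁ t ^ 2) ^ α = s₁ t ^ (2 * α) := by
        rw [← Real.rpow_natCast (s₁ t) 2, ← Real.rpow_mul hs1p.le]; norm_num
      calc (s₁ t ^ 2 + s₂ t ^ 2) ^ α ≤ ((2:ℝ) * s₁ t ^ 2) ^ α :=
            Real.rpow_le_rpow (by positivity) h2s hα.le
        _ = 2 ^ α * s₁ t ^ (2 * α) := by rw [h2r, h2e]
    have e3 : (s₁ t ^ 2 + s₂ t ^ 2) ^ α * s₁ t ^ (-(2 * α)) ≤ 2 ^ α := by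
      calc (s₁ t ^ 2 + s₂ t ^ 2) ^ α * s₁ t ^ (-(2 * α))
          ≤ (2 ^ α * s₁ t ^ (2 * α)) * s₁ t ^ (-(2 * α)) :=
            mul_le_mul_of_nonneg_right hupper hsneg.le
        _ = 2 ^ α * (s₁ t ^ (2 * α) * s₁ t ^ (-(2 * α))) := by ring
        _ = 2 ^ α := by rw [e2]; ring
    have e4 : L * s₁ t * (s₁ t ^ 2 + s₂ t ^ 2) ^ α * (-(2 * α)) * s₁ t ^ (-(2 * α) - 1)
          + 2 ^ α * C₁
        = -(2 * α * L) * ((s₁ t ^ 2 + s₂ t ^ 2) ^ α * (s₁ t ^ (-(2 * α) - 1) * s₁ t))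
          + 2 ^ α * C₁ := by ring
    rw [e4, e1, hC₁L]
    have h5 : 2 * α * L * ((s₁ t ^ 2 + s₂ t ^ 2) ^ α * s₁ t ^ (-(2 * α))) ≤ 2 * α * L * 2 ^ α :=
      mul_le_mul_of_nonneg_left e3 (by positivity)
    linarith
  have hgmono : MonotoneOn (fun t => s₁ t ^ (-(2 * α)) + 2 ^ α * C₁ * t) (Icc T₁ T) := by
    apply monotoneOn_of_deriv_nonneg (convex_Icc T₁ T)
    · intro t ht
      exact ((hgd t ht).choose_spec.1).continuousAt.continuousWithinAt
    · rw [interior_Icc]; intro t ht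
      exact ((hgd t (Ioo_subset_Icc_self ht)).choose_spec.1).differentiableAt.differentiableWithinAt
    · rw [interior_Icc]; intro t ht
      obtain ⟨d', hder, hle⟩ := hgd t (Ioo_subset_Icc_self ht)
      rw [hder.deriv]; exact hle
  -- endpoint comparisons
  have hTmem : T ∈ Icc T₁ T := ⟨hT₁T, le_refl T⟩
  have hT₁mem' : T₁ ∈ Icc T₁ T := ⟨le_refl T₁, hT₁T⟩
  have hψT : Real.log (χ T) + (1 - μ) * Real.log (s₁ T) ≤
      Real.log (χ T₁) + (1 - μ) * Real.log (s₁ T₁) := hψmono hT₁mem' hTmem hT₁T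
  have hfT' : s₁ T ^ (-(2 * α)) + C₁ * T ≤ s₁ T₁ ^ (-(2 * α)) + C₁ * T₁ :=
    hfmono hT₁mem' hTmem hT₁T
  have hgT' : s₁ T₁ ^ (-(2 * α)) + 2 ^ α * C₁ * T₁ ≤ s₁ T ^ (-(2 * α)) + 2 ^ α * C₁ * T :=
    hgmono hT₁mem' hTmem hT₁T
  -- final algebra
  have hP : 0 < s₁ T₁ := hpos₁ T₁ ⟨hT₁0, hT₁T⟩
  have hQ : 0 < s₁ T := hpos₁ T ⟨hT₁0.trans hT₁T, le_refl T⟩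
  have hχT₁ : 0 < χ T₁ := hχpos T₁ ⟨hT₁0, hT₁T⟩
  have hχT : 0 < χ T := hχpos T ⟨hT₁0.trans hT₁T, le_refl T⟩
  have hτ : 0 ≤ T - T₁ := by linarith
  have hQ2 : 0 < s₁ T ^ (2 * α) := Real.rpow_pos_of_pos hQ _
  have hP2 : 0 < s₁ T₁ ^ (2 * α) := Real.rpow_pos_of_pos hP _
  have h2αp : (0:ℝ) < 2 ^ α := Real.rpow_pos_of_pos (by norm_num) α
  have h2α1 : (1:ℝ) ≤ 2 ^ α := by
    calc (1:ℝ) = (2:ℝ) ^ (0:ℝ) := (Real.rpow_zero 2).symm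
      _ ≤ 2 ^ α := Real.rpow_le_rpow_of_exponent_le (by norm_num) hα.le
  have hx0 : 0 ≤ C₁ * s₁ T ^ (2 * α) * (T - T₁) :=
    mul_nonneg (mul_nonneg hC₁pos.le hQ2.le) hτ
  have hBx : 1 + 2 ^ α * C₁ * s₁ T ^ (2 * α) * (T - T₁)
      = 1 + 2 ^ α * (C₁ * s₁ T ^ (2 * α) * (T - T₁)) := by ring
  have hQi : s₁ T ^ (-(2 * α)) = (s₁ T ^ (2 * α))⁻¹ := Real.rpow_neg hQ.le _
  have hPi : s₁ T₁ ^ (-(2 * α)) = (s₁ T₁ ^ (2 * α))⁻¹ := Real.rpow_neg hP.le _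
  rw [hQi, hPi] at hfT' hgT'
  have hR : 0 < s₁ T / s₁ T₁ := div_pos hQ hP
  have hR2 : (s₁ T / s₁ T₁) ^ (2 * α) = s₁ T ^ (2 * α) * (s₁ T₁ ^ (2 * α))⁻¹ := by
    rw [Real.div_rpow hQ.le hP.le, div_eq_mul_inv]
  have hR2low : 1 + C₁ * s₁ T ^ (2 * α) * (T - T₁) ≤ (s₁ T / s₁ T₁) ^ (2 * α) := by
    have h := mul_le_mul_of_nonneg_left
      (show (s₁ T ^ (2 * α))⁻¹ + C₁ * (T - T₁) ≤ (s₁ T₁ ^ (2 * α))⁻¹ by linarith) hQ2.le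
    have e : s₁ T ^ (2 * α) * ((s₁ T ^ (2 * α))⁻¹ + C₁ * (T - T₁))
        = 1 + C₁ * s₁ T ^ (2 * α) * (T - T₁) := by field_simp
    rw [e] at h
    rw [hR2]
    linarith
  have hBern : 1 + 2 ^ α * (C₁ * s₁ T ^ (2 * α) * (T - T₁))
      ≤ (1 + C₁ * s₁ T ^ (2 * α) * (T - T₁)) ^ ((2:ℝ) ^ α) :=
    one_add_mul_self_le_rpow_one_add (by linarith) h2α1
  have hc1 : (1 + C₁ * s₁ T ^ (2 * α) * (T - T₁)) ^ ((2:ℝ) ^ α)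
      ≤ ((s₁ T / s₁ T₁) ^ (2 * α)) ^ ((2:ℝ) ^ α) :=
    Real.rpow_le_rpow (by linarith) hR2low h2αp.le
  have hc2 : ((s₁ T / s₁ T₁) ^ (2 * α)) ^ ((2:ℝ) ^ α)
      = (s₁ T / s₁ T₁) ^ (2 * α * 2 ^ α) := (Real.rpow_mul hR.le _ _).symm
  have hBR : 1 + 2 ^ α * (C₁ * s₁ T ^ (2 * α) * (T - T₁))
      ≤ (s₁ T / s₁ T₁) ^ (2 * α * 2 ^ α) := by
    rw [← hc2]; exact hBern.trans hc1
  have hB0 : (0:ℝ) < 1 + 2 ^ α * (C₁ * s₁ T ^ (2 * α) * (T - T₁)) := by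
    nlinarith [mul_nonneg h2αp.le hx0]
  have hB1 : (1:ℝ) ≤ 1 + 2 ^ α * (C₁ * s₁ T ^ (2 * α) * (T - T₁)) := by
    nlinarith [mul_nonneg h2αp.le hx0]
  have he0 : 0 ≤ (1 - μ) / (α * 2 ^ (α + 1)) := by
    apply div_nonneg (by linarith)
    positivity
  have hexp : 2 * α * 2 ^ α * ((1 - μ) / (α * 2 ^ (α + 1))) = 1 - μ := by
    have h2a1 : (2:ℝ) ^ (α + 1) = 2 ^ α * 2 := by
      rw [Real.rpow_add (by norm_num), Real.rpow_one]
    rw [h2a1]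
    field_simp
  have hBe : (1 + 2 ^ α * (C₁ * s₁ T ^ (2 * α) * (T - T₁))) ^ ((1 - μ) / (α * 2 ^ (α + 1)))
      ≤ (s₁ T / s₁ T₁) ^ (1 - μ) := by
    calc (1 + 2 ^ α * (C₁ * s₁ T ^ (2 * α) * (T - T₁))) ^ ((1 - μ) / (α * 2 ^ (α + 1)))
        ≤ ((s₁ T / s₁ T₁) ^ (2 * α * 2 ^ α)) ^ ((1 - μ) / (α * 2 ^ (α + 1))) :=
          Real.rpow_le_rpow hB0.le hBR he0
      _ = (s₁ T / s₁ T₁) ^ (2 * α * 2 ^ α * ((1 - μ) / (α * 2 ^ (α + 1)))) :=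
          (Real.rpow_mul hR.le _ _).symm
      _ = (s₁ T / s₁ T₁) ^ (1 - μ) := by rw [hexp]
  have hmul : χ T * s₁ T ^ (1 - μ) ≤ χ T₁ * s₁ T₁ ^ (1 - μ) := by
    have l1 : Real.log (χ T * s₁ T ^ (1 - μ)) =
        Real.log (χ T) + (1 - μ) * Real.log (s₁ T) := by
      rw [Real.log_mul hχT.ne' (Real.rpow_pos_of_pos hQ _).ne', Real.log_rpow hQ]
    have l2 : Real.log (χ T₁ * s₁ T₁ ^ (1 - μ)) =
        Real.log (χ T₁) + (1 - μ) * Real.log (s₁ T₁) := by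
      rw [Real.log_mul hχT₁.ne' (Real.rpow_pos_of_pos hP _).ne', Real.log_rpow hP]
    have hlogle : Real.log (χ T * s₁ T ^ (1 - μ)) ≤ Real.log (χ T₁ * s₁ T₁ ^ (1 - μ)) := by
      rw [l1, l2]; exact hψT
    have := Real.exp_le_exp.mpr hlogle
    rwa [Real.exp_log (mul_pos hχT (Real.rpow_pos_of_pos hQ _)),
      Real.exp_log (mul_pos hχT₁ (Real.rpow_pos_of_pos hP _))] at this
  have hPμ : 0 < s₁ T₁ ^ (1 - μ) := Real.rpow_pos_of_pos hP _
  have hRμ : (s₁ T / s₁ T₁) ^ (1 - μ) = s₁ T ^ (1 - μ) * (s₁ T₁ ^ (1 - μ))⁻¹ := by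
    rw [Real.div_rpow hQ.le hP.le, div_eq_mul_inv]
  have hBepos : 0 < (1 + 2 ^ α * (C₁ * s₁ T ^ (2 * α) * (T - T₁)))
      ^ ((1 - μ) / (α * 2 ^ (α + 1))) := Real.rpow_pos_of_pos hB0 _
  have part2 : χ T ≤ χ T₁ *
      (1 + 2 ^ α * C₁ * s₁ T ^ (2 * α) * (T - T₁)) ^ (-((1 - μ) / (α * 2 ^ (α + 1)))) := by
    rw [hBx, Real.rpow_neg hB0.le, ← div_eq_mul_inv, le_div_iff₀ hBepos]
    have step1 : χ T * ((1 + 2 ^ α * (C₁ * s₁ T ^ (2 * α) * (T - T₁)))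
          ^ ((1 - μ) / (α * 2 ^ (α + 1))))
        ≤ χ T * ((s₁ T / s₁ T₁) ^ (1 - μ)) :=
      mul_le_mul_of_nonneg_left hBe hχT.le
    have step2 : χ T * ((s₁ T / s₁ T₁) ^ (1 - μ)) ≤ χ T₁ := by
      rw [hRμ]
      have h := mul_le_mul_of_nonneg_right hmul (inv_nonneg.mpr hPμ.le)
      have e5 : χ T₁ * s₁ T₁ ^ (1 - μ) * (s₁ T₁ ^ (1 - μ))⁻¹ = χ T₁ := by field_simp
      calc χ T * (s₁ T ^ (1 - μ) * (s₁ T₁ ^ (1 - μ))⁻¹)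
          = χ T * s₁ T ^ (1 - μ) * (s₁ T₁ ^ (1 - μ))⁻¹ := by ring
        _ ≤ χ T₁ * s₁ T₁ ^ (1 - μ) * (s₁ T₁ ^ (1 - μ))⁻¹ := h
        _ = χ T₁ := e5
    exact step1.trans step2
  have part3 : χ T₁ *
      (1 + 2 ^ α * C₁ * s₁ T ^ (2 * α) * (T - T₁)) ^ (-((1 - μ) / (α * 2 ^ (α + 1)))) ≤
      χ T₁ := by
    rw [hBx]
    have h1e : (1 + 2 ^ α * (C₁ * s₁ T ^ (2 * α) * (T - T₁)))
        ^ (-((1 - μ) / (α * 2 ^ (α + 1)))) ≤ 1 :=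
      Real.rpow_le_one_of_one_le_of_nonpos hB1 (neg_nonpos.mpr he0)
    exact mul_le_of_le_one_right hχT₁.le h1e
  refine ⟨?_, ?_, ?_⟩
  · -- part 1
    intro t ht
    obtain ⟨d', hder, hle⟩ := hDχ t (hsub ht)
    rw [hder.deriv]
    have h1 := hs2a t (hsub ht)
    have hχp := hχpos t (hsub ht)
    have hsp : 0 < s₁ t ^ (2 * α) := Real.rpow_pos_of_pos (hpos₁ t (hsub ht)) _
    have hcoef : -((1 - μ) * Real.log lam / (2 * r₀ ^ α)) = -((1 - μ) * L / 2) := by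
      rw [hLdef]; ring
    rw [hcoef]
    have h1μL : 0 < (1 - μ) * L := mul_pos (by linarith) hLpos
    have t2 : (1 - μ) * L * (s₁ t ^ (2 * α)) * χ t ≤
        (1 - μ) * L * ((s₁ t ^ 2 + s₂ t ^ 2) ^ α) * χ t :=
      mul_le_mul_of_nonneg_right (mul_le_mul_of_nonneg_left h1 h1μL.le) hχp.le
    have t1 : 0 < (1 - μ) * L * (s₁ t ^ (2 * α)) * χ t :=
      mul_pos (mul_pos h1μL hsp) hχp
    linarith
  · -- part 2
    exact part2
  · -- part 3
    exact part3
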